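/- arXiv:2507.06630 — 4 statements merged into one kernel-verified Lean document; each statement's English description precedes it below -/
import Mathlib

section
/- For a differentiable vector field v: S² → ℝ³ and its tangential component v_τ := Pv, the surface strain rate tensors satisfy D_{S²}(v_τ) = D_{S²}(v) − (v·n)P on S². -/
open MeasureTheory Matrix
open scoped RealInnerProductSpace

noncomputable section

abbrev E3 : Type := EuclideanSpace ℝ (Fin 3)

def proj3 (y : E3) : Matrix (Fin 3) (Fin 3) ℝ :=
  Matrix.of fun i j => (if i = j then (1:ℝ) else 0) - y i * y j

def pd (f : E3 → ℝ) (x : E3) (i : Fin 3) : ℝ :=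
  fderiv ℝ f x (EuclideanSpace.single i 1)

def gradM (u : E3 → E3) (x : E3) : Matrix (Fin 3) (Fin 3) ℝ :=
  Matrix.of fun i j => fderiv ℝ (fun z => u z j) x (EuclideanSpace.single i 1)

def symM (A : Matrix (Fin 3) (Fin 3) ℝ) : Matrix (Fin 3) (Fin 3) ℝ :=
  (1/2 : ℝ) • (A + Aᵀ)

def tgradM (u : E3 → E3) (y : E3) : Matrix (Fin 3) (Fin 3) ℝ :=
  proj3 y * gradM u y

def strainS (u : E3 → E3) (y : E3) : Matrix (Fin 3) (Fin 3) ℝ :=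
  proj3 y * symM (tgradM u y) * proj3 y

def vE (v : E3 → E3) (x : E3) : E3 := ‖x‖ • v (‖x‖⁻¹ • x)

def ra (a : E3) : E3 → E3 := fun x => WithLp.toLp 2 (crossProduct a x)

def shell (ε : ℝ) : Set E3 := {x : E3 | 1 < ‖x‖ ∧ ‖x‖ < 1 + ε}

def sphM : Measure E3 := (Measure.hausdorffMeasure 2 : Measure E3).restrict (Metric.sphere (0:E3) 1)

def avg (ε : ℝ) (k : ℕ) (φ : E3 → ℝ) (y : E3) : ℝ :=
  (1/ε) * ∫ r in (1:ℝ)..(1+ε), φ (r • y) * r ^ k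

def avgV (ε : ℝ) (k : ℕ) (u : E3 → E3) (y : E3) : E3 :=
  WithLp.toLp 2 (fun j => (1/ε) * ∫ r in (1:ℝ)..(1+ε), u (r • y) j * r ^ k)

def div3 (u : E3 → E3) (x : E3) : ℝ :=
  ∑ i, fderiv ℝ (fun z => u z i) x (EuclideanSpace.single i 1)

def sdiv (F : E3 → E3) (y : E3) : ℝ :=
  ∑ j, ∑ i, proj3 y j i * fderiv ℝ (fun x => F (‖x‖⁻¹ • x) j) y (EuclideanSpace.single i 1)

def frob2 (A : Matrix (Fin 3) (Fin 3) ℝ) : ℝ := ∑ i, ∑ j, (A i j)^2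


/-- `D_{S²}(v_τ) = D_{S²}(v) − (v·n) P` on `S²`, where `v_τ = Pv`
(realized via the extension `z ↦ v z − ⟪v z, z⟫ z`). -/
theorem stmt3 (v : E3 → E3) (y : E3) (hy : ‖y‖ = 1)
    (hv : DifferentiableAt ℝ v y) :
    strainS (fun z => v z - ⟪v z, z⟫ • z) y
      = strainS v y - ⟪v y, y⟫ • proj3 y := by
  classical
  have hsum : ∑ k, y k * y k = 1 := by
    have h1 : ⟪y, y⟫ = 1 := by rw [real_inner_self_eq_norm_sq, hy]; norm_num
    simpa only [PiLp.inner_apply, RCLike.inner_apply, conj_trivial] using h1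
  set c : ℝ := ⟪v y, y⟫ with hc
  have hvj : ∀ j, DifferentiableAt ℝ (fun z => v z j) y := fun j =>
    ((EuclideanSpace.proj j : E3 →L[ℝ] ℝ).differentiableAt).comp y hv
  have hinner : DifferentiableAt ℝ (fun z => ⟪v z, z⟫) y := hv.inner ℝ differentiableAt_id
  have hzj : ∀ j, DifferentiableAt ℝ (fun z : E3 => z j) y := fun j =>
    (EuclideanSpace.proj j : E3 →L[ℝ] ℝ).differentiableAt
  set w : Fin 3 → ℝ := fun i => fderiv ℝ (fun z => ⟪v z, z⟫) y (EuclideanSpace.single i 1) with hw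
  set W : Matrix (Fin 3) (Fin 3) ℝ := Matrix.of (fun i j => w i * y j) with hWdef
  set Q : Matrix (Fin 3) (Fin 3) ℝ := Matrix.of (fun i j => y i * y j) with hQdef
  set P : Matrix (Fin 3) (Fin 3) ℝ := proj3 y with hPdef
  -- gradient identity
  have hG : gradM (fun z => v z - ⟪v z, z⟫ • z) y
      = gradM v y - W - c • (1 : Matrix (Fin 3) (Fin 3) ℝ) := by
    ext i j
    simp only [gradM, Matrix.of_apply, Matrix.sub_apply, Matrix.smul_apply, Matrix.one_apply,
      smul_eq_mul, hWdef]
    have heq : (fun z => (v z - ⟪v z, z⟫ • z) j) = fun z => v z j - ⟪v z, z⟫ * z j := rfl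
    have hdz : fderiv ℝ (fun z : E3 => z j) y = EuclideanSpace.proj j :=
      (EuclideanSpace.proj j : E3 →L[ℝ] ℝ).fderiv
    rw [heq, fderiv_fun_sub (g := fun z => ⟪v z, z⟫ * z j) (hvj j) (hinner.mul (hzj j)), fderiv_fun_mul hinner (hzj j)]
    simp only [ContinuousLinearMap.sub_apply, ContinuousLinearMap.add_apply,
      ContinuousLinearMap.smul_apply, smul_eq_mul, hdz]
    have hproj : (EuclideanSpace.proj j : E3 →L[ℝ] ℝ) (EuclideanSpace.single i (1:ℝ))
        = if i = j then (1:ℝ) else 0 := by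
      simp [EuclideanSpace.single_apply, eq_comm]
    rw [hproj]
    ring
  -- matrix facts
  have hP1Q : P = 1 - Q := by
    ext i j
    simp [hPdef, proj3, hQdef, Matrix.one_apply]
  have hQQ : Q * Q = Q := by
    ext i j
    simp only [Matrix.mul_apply, hQdef, Matrix.of_apply]
    calc ∑ k, y i * y k * (y k * y j) = y i * y j * ∑ k, y k * y k := by
          rw [Finset.mul_sum]; exact Finset.sum_congr rfl fun k _ => by ring
      _ = y i * y j := by rw [hsum]; ring
  have hWQ : W * Q = W := by
    ext i j
    simp only [Matrix.mul_apply, hWdef, hQdef, Matrix.of_apply]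
    calc ∑ k, w i * y k * (y k * y j) = w i * y j * ∑ k, y k * y k := by
          rw [Finset.mul_sum]; exact Finset.sum_congr rfl fun k _ => by ring
      _ = w i * y j := by rw [hsum]; ring
  have hWP : W * P = 0 := by
    rw [hP1Q, Matrix.mul_sub, Matrix.mul_one, hWQ, sub_self]
  have hPT : Pᵀ = P := by
    ext i j
    simp only [Matrix.transpose_apply, hPdef, proj3, Matrix.of_apply]
    by_cases h : i = j
    · subst h; ring
    · simp [h, Ne.symm h]; ring
  have hPP : P * P = P := by
    rw [hP1Q]
    simp only [Matrix.mul_sub, Matrix.sub_mul, Matrix.mul_one, Matrix.one_mul, hQQ]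
    abel
  have hPWT : P * Wᵀ = 0 := by
    have : (W * P)ᵀ = (0 : Matrix (Fin 3) (Fin 3) ℝ)ᵀ := by rw [hWP]
    simpa [Matrix.transpose_mul, hPT] using this
  have hsymP : symM P = P := by
    rw [symM, hPT]
    rw [← two_smul ℝ P, smul_smul]
    norm_num
  -- symM linearity
  have hsymM_sub : ∀ A B : Matrix (Fin 3) (Fin 3) ℝ, symM (A - B) = symM A - symM B := by
    intro A B
    simp only [symM, Matrix.transpose_sub]
    rw [show A - B + (Aᵀ - Bᵀ) = (A + Aᵀ) - (B + Bᵀ) from by abel, smul_sub]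
  have hsymM_smul : ∀ (r : ℝ) (A : Matrix (Fin 3) (Fin 3) ℝ), symM (r • A) = r • symM A := by
    intro r A
    simp only [symM, Matrix.transpose_smul, ← smul_add, smul_smul]
    rw [mul_comm]
  -- the W-part vanishes
  have hWpart : P * symM (P * W) * P = 0 := by
    rw [symM, Matrix.transpose_mul, hPT]
    rw [Matrix.mul_smul, Matrix.smul_mul]
    rw [Matrix.mul_add, Matrix.add_mul]
    have h1 : P * (P * W) * P = 0 := by
      rw [Matrix.mul_assoc, Matrix.mul_assoc, hWP, Matrix.mul_zero, Matrix.mul_zero]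
    have h2 : P * (Wᵀ * P) * P = 0 := by
      rw [← Matrix.mul_assoc, hPWT, Matrix.zero_mul, Matrix.zero_mul]
    rw [h1, h2]
    simp
  -- assemble
  show P * symM (P * gradM (fun z => v z - ⟪v z, z⟫ • z) y) * P
      = P * symM (P * gradM v y) * P - c • P
  rw [hG]
  rw [Matrix.mul_sub, Matrix.mul_sub, Matrix.mul_smul, Matrix.mul_one]
  rw [hsymM_sub, hsymM_sub, hsymM_smul]
  rw [hsymP]
  simp only [Matrix.mul_sub, Matrix.sub_mul, Matrix.mul_smul, Matrix.smul_mul, hWpart, hPP,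
    sub_zero]
end
end

section
/- Let v be a tangential differentiable vector field on S² (v·n = 0) and v_E(x) := |x| v(x/|x|) its weighted extension. Then the strain rate tensor satisfies D(v_E)(x) = (D_{S²}(v))(x/|x|) for all x ∈ ℝ³ \ {0}. -/
open MeasureTheory Matrix
open scoped RealInnerProductSpace

noncomputable section

lemma hasFDerivAt_norm' (x : E3) (hx : x ≠ 0) :
    HasFDerivAt (fun z : E3 => ‖z‖) (innerSL ℝ (‖x‖⁻¹ • x)) x := by
  have hxx : ⟪x, x⟫ ≠ 0 := inner_self_ne_zero.mpr hx
  have h1 : HasFDerivAt (fun z : E3 => ⟪z, z⟫) _ x :=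
    (hasFDerivAt_id x).inner ℝ (hasFDerivAt_id x)
  have h2 := h1.sqrt hxx
  have heq : (fun z : E3 => Real.sqrt ⟪z, z⟫) = fun z : E3 => ‖z‖ := by
    funext z
    rw [real_inner_self_eq_norm_sq]
    exact Real.sqrt_sq (norm_nonneg z)
  rw [heq] at h2
  refine h2.congr_fderiv ?_
  ext h
  have hn : ‖x‖ ≠ 0 := norm_ne_zero_iff.mpr hx
  simp only [ContinuousLinearMap.smul_apply, ContinuousLinearMap.coe_comp', Function.comp_apply,
    ContinuousLinearMap.prod_apply, ContinuousLinearMap.coe_id', id_eq, fderivInnerCLM_apply,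
    innerSL_apply_apply, real_inner_smul_left]
  rw [real_inner_self_eq_norm_sq, Real.sqrt_sq (norm_nonneg x), real_inner_comm x h]
  field_simp
  ring_nf
  field_simp

lemma hasFDerivAt_unit (x : E3) (hx : x ≠ 0) :
    HasFDerivAt (fun z : E3 => ‖z‖⁻¹ • z)
      (‖x‖⁻¹ • (ContinuousLinearMap.id ℝ E3 -
        (innerSL ℝ (‖x‖⁻¹ • x)).smulRight (‖x‖⁻¹ • x))) x := by
  have hn : ‖x‖ ≠ 0 := norm_ne_zero_iff.mpr hx
  have hinv : HasFDerivAt (fun z : E3 => ‖z‖⁻¹)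
      ((-(‖x‖ ^ 2)⁻¹ : ℝ) • innerSL ℝ (‖x‖⁻¹ • x)) x :=
    (hasDerivAt_inv hn).comp_hasFDerivAt x (hasFDerivAt_norm' x hx)
  have h := hinv.smul (hasFDerivAt_id x)
  refine h.congr_fderiv ?_
  refine ContinuousLinearMap.ext fun h' => ?_
  simp only [ContinuousLinearMap.smul_apply, ContinuousLinearMap.sub_apply,
    ContinuousLinearMap.coe_id', id_eq, ContinuousLinearMap.add_apply,
    ContinuousLinearMap.smulRight_apply, innerSL_apply_apply, real_inner_smul_left,
    smul_smul, smul_sub, neg_smul]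
  rw [sub_eq_add_neg, ← neg_smul]
  congr 1
  field_simp
  ring_nf
  rw [ContinuousLinearMap.smul_apply, innerSL_apply_apply, real_inner_smul_left, smul_eq_mul,
    ← neg_smul]
  congr 1
  ring

lemma eq_sum_single' (z : E3) : ∑ k, z k • EuclideanSpace.single k (1:ℝ) = z := by
  refine PiLp.ext fun m => ?_
  rw [WithLp.ofLp_sum, Finset.sum_apply]
  simp [EuclideanSpace.single_apply, PiLp.smul_apply]

lemma vmv_mul (a b : Fin 3 → ℝ) (M : Matrix (Fin 3) (Fin 3) ℝ) :
    Matrix.vecMulVec a b * M = Matrix.vecMulVec a (b ᵥ* M) := by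
  ext i j
  simp [Matrix.mul_apply, Matrix.vecMulVec_apply, Matrix.vecMul, dotProduct,
    Finset.mul_sum, mul_assoc]

lemma mul_vmv (a b : Fin 3 → ℝ) (M : Matrix (Fin 3) (Fin 3) ℝ) :
    M * Matrix.vecMulVec a b = Matrix.vecMulVec (M *ᵥ a) b := by
  ext i j
  simp [Matrix.mul_apply, Matrix.vecMulVec_apply, Matrix.mulVec, dotProduct,
    Finset.sum_mul, mul_assoc]

lemma vmv_transpose (a b : Fin 3 → ℝ) :
    (Matrix.vecMulVec a b)ᵀ = Matrix.vecMulVec b a := by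
  ext i j
  simp [Matrix.vecMulVec_apply, mul_comm]


lemma matrix_key (W : Matrix (Fin 3) (Fin 3) ℝ) (yy vv : Fin 3 → ℝ)
    (h1 : W *ᵥ yy = -vv) (h2 : yy ᵥ* W = 0) (h3 : vv ⬝ᵥ yy = 0) :
    symM (vecMulVec yy vv + W) =
      (1 - vecMulVec yy yy) * symM W * (1 - vecMulVec yy yy) := by
  set S := symM W with hS
  have hST : Sᵀ = S := by
    simp only [hS, symM, Matrix.transpose_smul, Matrix.transpose_add,
      Matrix.transpose_transpose]
    rw [add_comm]
  have hSy : S *ᵥ yy = (-(1/2) : ℝ) • vv := by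
    simp only [hS, symM, Matrix.smul_mulVec, Matrix.add_mulVec,
      Matrix.mulVec_transpose, h1, h2]
    funext i
    simp
  have hyS : yy ᵥ* S = (-(1/2) : ℝ) • vv := by
    rw [← hST, Matrix.vecMul_transpose, hSy]
  have hNS : vecMulVec yy yy * S = (-(1/2) : ℝ) • vecMulVec yy vv := by
    rw [vmv_mul, hyS]
    ext i j
    simp [Matrix.vecMulVec_apply]
    ring
  have hSN : S * vecMulVec yy yy = (-(1/2) : ℝ) • vecMulVec vv yy := by
    rw [mul_vmv, hSy]
    ext i j
    simp [Matrix.vecMulVec_apply]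
    ring
  have hvN : vv ᵥ* vecMulVec yy yy = 0 := by
    funext j
    have : ∑ i, vv i * (yy i * yy j) = (∑ i, vv i * yy i) * yy j := by
      rw [Finset.sum_mul]; congr 1; funext i; ring
    simp only [Matrix.vecMul, Matrix.vecMulVec_apply, dotProduct]
    rw [this]
    have h3' : ∑ i, vv i * yy i = 0 := h3
    rw [h3', zero_mul]
    rfl
  have hNSN : vecMulVec yy yy * S * vecMulVec yy yy = 0 := by
    rw [hNS, Matrix.smul_mul, vmv_mul, hvN]
    ext i j
    simp [Matrix.vecMulVec_apply]
  have hL : symM (vecMulVec yy vv + W) =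
      S + (1/2 : ℝ) • vecMulVec yy vv + (1/2 : ℝ) • vecMulVec vv yy := by
    simp only [symM, Matrix.transpose_add, vmv_transpose, hS]
    ext i j
    simp [Matrix.add_apply, Matrix.smul_apply, Matrix.vecMulVec_apply, Matrix.transpose_apply]
    ring
  have expand : (1 - vecMulVec yy yy) * S * (1 - vecMulVec yy yy) =
      S - vecMulVec yy yy * S - S * vecMulVec yy yy +
        vecMulVec yy yy * S * vecMulVec yy yy := by noncomm_ring
  rw [hL, expand, hNSN, hNS, hSN]
  ext i j
  simp [Matrix.add_apply, Matrix.sub_apply, Matrix.smul_apply, Matrix.vecMulVec_apply]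

/-- For tangential `v` on `S²`, the strain rate tensor of the weighted extension
satisfies `D(v_E)(x) = (D_{S²}(v))(x/|x|)`. -/
theorem stmt9 (v : E3 → E3) (x : E3) (hx : x ≠ 0)
    (hv : DifferentiableAt ℝ v (‖x‖⁻¹ • x))
    (hvt : ∀ z : E3, ‖z‖ = 1 → ⟪v z, z⟫ = 0) :
    symM (gradM (vE v) x) = strainS v (‖x‖⁻¹ • x) := by
  have hn : ‖x‖ ≠ 0 := norm_ne_zero_iff.mpr hx
  set y : E3 := ‖x‖⁻¹ • x with hydef
  have hy1 : ‖y‖ = 1 := by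
    rw [hydef, norm_smul, norm_inv, norm_norm, inv_mul_cancel₀ hn]
  set G : E3 →L[ℝ] E3 := ‖x‖⁻¹ • (ContinuousLinearMap.id ℝ E3 -
    (innerSL ℝ y).smulRight y) with hGdef
  set Dv : E3 →L[ℝ] E3 := fderiv ℝ v y with hDv
  have hg : HasFDerivAt (fun z : E3 => ‖z‖⁻¹ • z) G x := hasFDerivAt_unit x hx
  have hvy : HasFDerivAt v Dv y := hv.hasFDerivAt
  have hcomp : HasFDerivAt (fun z : E3 => v (‖z‖⁻¹ • z)) (Dv.comp G) x := hvy.comp x hg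
  have hnormAt : HasFDerivAt (fun z : E3 => ‖z‖) (innerSL ℝ y) x := hasFDerivAt_norm' x hx
  set L : E3 →L[ℝ] E3 := ‖x‖ • Dv.comp G + (innerSL ℝ y).smulRight (v y) with hLdef
  have hvE : HasFDerivAt (vE v) L x := hnormAt.smul hcomp
  set e : Fin 3 → E3 := fun i => EuclideanSpace.single i (1:ℝ) with hedef
  have hyei : ∀ i, ⟪y, e i⟫ = y i := by
    intro i
    simp [hedef, EuclideanSpace.inner_single_right]
  have hGe : ∀ i, G (e i) = ‖x‖⁻¹ • (e i - y i • y) := by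
    intro i
    simp only [hGdef, ContinuousLinearMap.smul_apply, ContinuousLinearMap.sub_apply,
      ContinuousLinearMap.coe_id', id_eq, ContinuousLinearMap.smulRight_apply,
      innerSL_apply_apply, hyei]
  have hLe : ∀ i, L (e i) = y i • v y + Dv (e i - y i • y) := by
    intro i
    have h0 : L (e i) = ‖x‖ • Dv (G (e i)) + ⟪y, e i⟫ • v y := rfl
    rw [h0, hGe i, ContinuousLinearMap.map_smul, smul_smul, mul_inv_cancel₀ hn, one_smul,
      hyei, add_comm]
  -- gradient entries
  have hgrad : ∀ i j, gradM (vE v) x i j = y i * v y j + Dv (e i - y i • y) j := by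
    intro i j
    have hj := ((EuclideanSpace.proj j : E3 →L[ℝ] ℝ).hasFDerivAt (x := vE v x)).comp x hvE
    have hj' : HasFDerivAt (fun z => vE v z j)
        ((EuclideanSpace.proj j : E3 →L[ℝ] ℝ).comp L) x := hj
    simp only [gradM, Matrix.of_apply, hj'.fderiv, ContinuousLinearMap.coe_comp',
      Function.comp_apply]
    rw [show EuclideanSpace.single i (1:ℝ) = e i from rfl, hLe i]
    simp [PiLp.add_apply, PiLp.smul_apply, smul_eq_mul]
  -- tangential gradient entries
  have hvgrad : ∀ k j, gradM v y k j = Dv (e k) j := by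
    intro k j
    have hj := ((EuclideanSpace.proj j : E3 →L[ℝ] ℝ).hasFDerivAt (x := v y)).comp y hvy
    have hj' : HasFDerivAt (fun z => v z j)
        ((EuclideanSpace.proj j : E3 →L[ℝ] ℝ).comp Dv) y := hj
    simp only [gradM, Matrix.of_apply, hj'.fderiv, ContinuousLinearMap.coe_comp',
      Function.comp_apply]
    rfl
  have hDvy : ∀ j, Dv y j = ∑ k, y k * Dv (e k) j := by
    intro j
    conv_lhs => rw [← eq_sum_single' y]
    rw [map_sum, WithLp.ofLp_sum, Finset.sum_apply]
    congr 1
    funext k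
    rw [ContinuousLinearMap.map_smul]
    simp [PiLp.smul_apply, smul_eq_mul, hedef]
  have htg : ∀ i j, tgradM v y i j = Dv (e i - y i • y) j := by
    intro i j
    have hrhs : Dv (e i - y i • y) j = Dv (e i) j - y i * Dv y j := by
      rw [map_sub, ContinuousLinearMap.map_smul]
      simp [PiLp.sub_apply, PiLp.smul_apply, smul_eq_mul]
    rw [hrhs]
    simp only [tgradM, Matrix.mul_apply, proj3, Matrix.of_apply, hvgrad]
    rw [hDvy j]
    have hterm : ∀ k ∈ Finset.univ, ((if i = k then (1:ℝ) else 0) - y i * y k) * Dv (e k) j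
        = (if i = k then Dv (e k) j else 0) - y i * (y k * Dv (e k) j) := by
      intro k _
      rcases eq_or_ne i k with h | h <;> simp [h] <;> ring
    rw [Finset.sum_congr rfl hterm, Finset.sum_sub_distrib, Finset.sum_ite_eq,
      ← Finset.mul_sum]
    simp
  -- tangency: derivative of z ↦ ⟪v(z/|z|), z/|z|⟫ vanishes
  set LF : E3 →L[ℝ] ℝ :=
    (fderivInnerCLM ℝ (v y, y)).comp ((Dv.comp G).prod G) with hLF
  have hF : HasFDerivAt (fun z : E3 => ⟪v (‖z‖⁻¹ • z), (‖z‖⁻¹ • z : E3)⟫) LF x :=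
    hcomp.inner ℝ hg
  have hF0 : (fun z : E3 => ⟪v (‖z‖⁻¹ • z), (‖z‖⁻¹ • z : E3)⟫) =ᶠ[nhds x]
      fun _ => (0 : ℝ) := by
    filter_upwards [isOpen_compl_singleton.mem_nhds (by simpa using hx :
      x ∈ ({0}ᶜ : Set E3))] with z hz
    have hz0 : z ≠ 0 := by simpa using hz
    have hzn : ‖z‖ ≠ 0 := norm_ne_zero_iff.mpr hz0
    exact hvt _ (by rw [norm_smul, norm_inv, norm_norm, inv_mul_cancel₀ hzn])
  have hLF0 : LF = 0 := by
    have h1 : HasFDerivAt (fun _ : E3 => (0 : ℝ)) LF x :=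
      hF.congr_of_eventuallyEq hF0.symm
    exact h1.unique (hasFDerivAt_const 0 x)
  have hvyy : ⟪v y, y⟫ = 0 := hvt y hy1
  have hvye : ∀ i, ⟪v y, e i⟫ = v y i := by
    intro i
    simp [hedef, EuclideanSpace.inner_single_right]
  have hkey : ∀ i, ⟪Dv (e i - y i • y), y⟫ = -(v y i) := by
    intro i
    have h0 : LF (e i) = 0 := by rw [hLF0]; rfl
    have h1 : LF (e i) = ⟪v y, G (e i)⟫ + ⟪Dv (G (e i)), y⟫ := by
      simp [hLF, fderivInnerCLM_apply]
    rw [h1, hGe i, ContinuousLinearMap.map_smul, real_inner_smul_right,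
      real_inner_smul_left] at h0
    have h2 : ⟪v y, e i - y i • y⟫ + ⟪Dv (e i - y i • y), y⟫ = 0 := by
      have := mul_eq_zero.mp (by linarith [h0] :
        ‖x‖⁻¹ * (⟪v y, e i - y i • y⟫ + ⟪Dv (e i - y i • y), y⟫) = 0)
      rcases this with h | h
      · exact absurd h (inv_ne_zero hn)
      · exact h
    rw [inner_sub_right, real_inner_smul_right, hvye, hvyy, mul_zero, sub_zero] at h2
    linarith
  -- convert to coordinate sums
  have hyy1 : ∑ i, y i * y i = 1 := by
    have h1 : ⟪y, y⟫ = 1 := by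
      rw [real_inner_self_eq_norm_sq, hy1, one_pow]
    rw [PiLp.inner_apply] at h1
    simpa [sq] using h1
  set w : Fin 3 → Fin 3 → ℝ := fun i j => Dv (e i - y i • y) j with hw
  have hWy : ∀ i, ∑ j, w i j * y j = -(v y i) := by
    intro i
    have := hkey i
    rw [PiLp.inner_apply] at this
    simpa [hw, mul_comm] using this
  have hyW : ∀ j, ∑ i, y i * w i j = 0 := by
    intro j
    have hterm : ∀ i : Fin 3, y i • (e i - y i • y) = y i • e i - (y i * y i) • y := by
      intro i
      rw [smul_sub, smul_smul]
    have hsum : ∑ i, y i • (e i - y i • y) = (0 : E3) := by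
      rw [Finset.sum_congr rfl (fun i _ => hterm i), Finset.sum_sub_distrib,
        ← Finset.sum_smul, hyy1, one_smul, hedef, eq_sum_single' y, sub_self]
    have hv1 : (∑ i, y i • Dv (e i - y i • y)) = Dv (∑ i, y i • (e i - y i • y)) := by
      rw [map_sum]
      exact Finset.sum_congr rfl fun i _ => (ContinuousLinearMap.map_smul Dv _ _).symm
    have hv2 : (∑ i, y i • Dv (e i - y i • y)) = 0 := by
      rw [hv1, hsum, map_zero]
    calc ∑ i, y i * w i j = (∑ i, y i • Dv (e i - y i • y)) j := by
          rw [WithLp.ofLp_sum, Finset.sum_apply]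
          exact Finset.sum_congr rfl fun i _ => by
            simp [hw, PiLp.smul_apply, smul_eq_mul]
      _ = 0 := by rw [hv2]; rfl
  have hvyd : ∑ i, v y i * y i = 0 := by
    have := hvyy
    rw [PiLp.inner_apply] at this
    simpa [mul_comm] using this
  -- assemble matrices
  set yy : Fin 3 → ℝ := fun i => y i with hyydef
  set vv : Fin 3 → ℝ := fun i => v y i with hvvdef
  have hA : gradM (vE v) x = vecMulVec yy vv + Matrix.of w := by
    ext i j
    rw [hgrad i j]
    simp [Matrix.vecMulVec_apply, hyydef, hvvdef, hw]
  have hT : tgradM v y = Matrix.of w := by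
    ext i j
    rw [htg i j]
    rfl
  have hP : proj3 y = 1 - vecMulVec yy yy := by
    ext i j
    simp [proj3, Matrix.one_apply, Matrix.vecMulVec_apply, hyydef]
  have m1 : Matrix.of w *ᵥ yy = -vv := by
    funext i
    simp only [Matrix.mulVec, dotProduct, Matrix.of_apply]
    rw [show ∑ j, w i j * yy j = ∑ j, w i j * y j from rfl, hWy i]
    rfl
  have m2 : yy ᵥ* Matrix.of w = 0 := by
    funext j
    simp only [Matrix.vecMul, dotProduct, Matrix.of_apply]
    exact hyW j
  have m3 : vv ⬝ᵥ yy = 0 := hvyd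
  rw [show strainS v y = proj3 y * symM (tgradM v y) * proj3 y from rfl, hA, hT, hP]
  exact matrix_key (Matrix.of w) yy vv m1 m2 m3
end
end

section
/- Let ε ∈ (0,1) and k ∈ ℤ_{≥0}. For φ ∈ H¹(Ω_ε), the constant extension of the weighted average satisfies ‖φ − (M_ε^k φ)⁻‖_{L²(Ω_ε)} ≤ c ε ‖φ‖_{H¹(Ω_ε)}, where (M_ε^k φ)⁻(x) := (M_ε^k φ)(x/|x|) and c depends only on k. -/
open MeasureTheory Matrix
open scoped RealInnerProductSpace

noncomputable section

open MeasureTheory.Measure Set Metric intervalIntegral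
open scoped ENNReal NNReal

lemma cs_Ioc {a b : ℝ} (hab : a ≤ b) {h : ℝ → ℝ} (hc : Continuous h) :
    (∫ t in Set.Ioc a b, |h t|) ^ 2 ≤ (b - a) * ∫ t in Set.Ioc a b, (h t) ^ 2 := by
  set μ := volume.restrict (Set.Ioc a b) with hμ
  have hfin : IsFiniteMeasure μ := by
    constructor
    rw [hμ, Measure.restrict_apply_univ]
    exact measure_Ioc_lt_top
  obtain ⟨C, hC⟩ := (isCompact_Icc (a := a) (b := b)).exists_bound_of_continuousOn
    hc.continuousOn
  have hmem : ∀ p : ℝ≥0∞, MemLp (fun t => |h t|) p μ := by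
    intro p
    refine MemLp.of_bound hc.abs.aestronglyMeasurable C ?_
    filter_upwards [ae_restrict_mem measurableSet_Ioc] with t ht
    rw [Real.norm_eq_abs, abs_abs, ← Real.norm_eq_abs]
    exact hC t (Set.Ioc_subset_Icc_self ht)
  have hone : MemLp (fun _ : ℝ => (1:ℝ)) (ENNReal.ofReal 2) μ := memLp_const 1
  have hpq : Real.HolderConjugate 2 2 := by constructor <;> norm_num
  have key := integral_mul_le_Lp_mul_Lq_of_nonneg (μ := μ) hpq
    (f := fun t => |h t|) (g := fun _ => (1:ℝ))
    (Filter.Eventually.of_forall fun t => abs_nonneg _)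
    (Filter.Eventually.of_forall fun t => zero_le_one)
    (by simpa using hmem (ENNReal.ofReal 2)) hone
  simp only [mul_one] at key
  have h2 : ∀ t : ℝ, |h t| ^ (2:ℝ) = (h t) ^ 2 := by
    intro t
    rw [show (2:ℝ) = ((2:ℕ):ℝ) by norm_num, Real.rpow_natCast, sq_abs]
  have hone2 : ∀ t : ℝ, (1:ℝ) ^ (2:ℝ) = (1:ℝ) := fun _ => Real.one_rpow _
  rw [show (fun a_1 => |h a_1| ^ (2:ℝ)) = fun t => (h t)^2 from funext h2] at key
  rw [integral_congr_ae (Filter.Eventually.of_forall fun t => hone2 t)] at key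
  rw [MeasureTheory.integral_const, measureReal_def] at key
  have hμu : (μ Set.univ).toReal = b - a := by
    rw [hμ, Measure.restrict_apply_univ, Real.volume_Ioc, ENNReal.toReal_ofReal (by linarith)]
  rw [hμu] at key
  have hI2 : (0:ℝ) ≤ ∫ t, (h t)^2 ∂μ := integral_nonneg fun t => sq_nonneg _
  have hI1 : (0:ℝ) ≤ ∫ t, |h t| ∂μ := integral_nonneg fun t => abs_nonneg _
  calc (∫ t, |h t| ∂μ)^2 ≤ ((∫ t, (h t)^2 ∂μ) ^ ((1:ℝ)/2) * ((b-a) • (1:ℝ)) ^ ((1:ℝ)/2))^2 := by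
        apply pow_le_pow_left₀ hI1 key
    _ = (b - a) * ∫ t, (h t)^2 ∂μ := by
        rw [smul_eq_mul, mul_one, mul_pow, ← Real.rpow_natCast (_ ^ ((1:ℝ)/2)) 2,
          ← Real.rpow_natCast ((b-a) ^ ((1:ℝ)/2)) 2, ← Real.rpow_mul hI2, ← Real.rpow_mul (by linarith)]
        norm_num
        rw [mul_comm]


lemma integral_volumeIoiPow (n : ℕ) (g : ℝ → ℝ) :
    ∫ r : Set.Ioi (0:ℝ), g ↑r ∂(Measure.volumeIoiPow n) = ∫ r in Set.Ioi (0:ℝ), r ^ n * g r := by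
  simp only [Measure.volumeIoiPow, ENNReal.ofReal]
  rw [integral_withDensity_eq_integral_smul
    ((measurable_subtype_coe.pow_const _).real_toNNReal),
    integral_subtype_comap measurableSet_Ioi (fun a : ℝ => Real.toNNReal (a ^ n) • g a)]
  refine setIntegral_congr_fun measurableSet_Ioi fun x hx => ?_
  rw [NNReal.smul_def, Real.coe_toNNReal _ (pow_nonneg hx.out.le _), smul_eq_mul]

lemma polar_core (f : E3 → ℝ) (hf : Integrable f) :
    ((∫ x, f x) = ∫ y : Metric.sphere (0:E3) 1,
        (∫ r in Set.Ioi (0:ℝ), r ^ 2 * f (r • (y:E3))) ∂((volume : Measure E3).toSphere))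
  ∧ Integrable (fun y : Metric.sphere (0:E3) 1 =>
        ∫ r in Set.Ioi (0:ℝ), r ^ 2 * f (r • (y:E3))) ((volume : Measure E3).toSphere) := by
  have h0c : MeasurableSet ({0}ᶜ : Set E3) := (measurableSet_singleton (0:E3)).compl
  have h3 : Module.finrank ℝ E3 - 1 = 2 := by
    simp [finrank_euclideanSpace_fin]
  have mp := (volume : Measure E3).measurePreserving_homeomorphUnitSphereProd
  rw [h3] at mp
  set ν := (volume : Measure E3).toSphere.prod (Measure.volumeIoiPow 2) with hν
  set F : Metric.sphere (0:E3) 1 × Set.Ioi (0:ℝ) → ℝ :=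
    fun p => f ((homeomorphUnitSphereProd E3).symm p) with hF
  have hFval : ∀ p, F p = f ((p.2 : ℝ) • (p.1 : E3)) := by
    intro p; rw [hF]; simp
  have hcomp : (fun x : ({0}ᶜ : Set E3) => f ↑x) = F ∘ (homeomorphUnitSphereProd E3) := by
    funext x
    simp only [hF, Function.comp_apply, Homeomorph.symm_apply_apply]
  have hmap : Measure.map (Subtype.val : ({0}ᶜ : Set E3) → E3) ((volume : Measure E3).comap (Subtype.val : ({0}ᶜ : Set E3) → E3)) = volume := by
    rw [map_comap_subtype_coe h0c, restrict_compl_singleton]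
  have key : Integrable (fun x : ({0}ᶜ : Set E3) => f ↑x)
      ((volume : Measure E3).comap (Subtype.val : ({0}ᶜ : Set E3) → E3)) := by
    have := ((MeasurableEmbedding.subtype_coe h0c).integrable_map_iff
      (g := f) (μ := (volume : Measure E3).comap (Subtype.val : ({0}ᶜ : Set E3) → E3))).1
    rw [hmap] at this
    exact this hf
  have hFi : Integrable F ν := by
    rw [← mp.integrable_comp_emb (Homeomorph.measurableEmbedding _)]
    rw [show F ∘ (homeomorphUnitSphereProd E3) = fun x : ({0}ᶜ : Set E3) => f ↑x from hcomp.symm]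
    exact key
  have eq3 : ∀ y : Metric.sphere (0:E3) 1,
      (∫ r, F (y, r) ∂(Measure.volumeIoiPow 2)) = ∫ r in Set.Ioi (0:ℝ), r ^ 2 * f (r • (y:E3)) := by
    intro y
    rw [show (fun r : Set.Ioi (0:ℝ) => F (y, r))
        = fun r : Set.Ioi (0:ℝ) => (fun t : ℝ => f (t • (y:E3))) ↑r from
      funext fun r => hFval (y, r)]
    exact integral_volumeIoiPow 2 (fun t : ℝ => f (t • (y:E3)))
  constructor
  · calc ∫ x, f x ∂(volume : Measure E3)
        = ∫ x in ({0}ᶜ : Set E3), f x := by rw [restrict_compl_singleton]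
      _ = ∫ x : ({0}ᶜ : Set E3), f ↑x ∂((volume : Measure E3).comap (Subtype.val : ({0}ᶜ : Set E3) → E3)) :=
          (integral_subtype_comap h0c f).symm
      _ = ∫ p, F p ∂ν := by
          rw [hcomp]
          exact mp.integral_comp (Homeomorph.measurableEmbedding _) F
      _ = ∫ y, ∫ r, F (y, r) ∂(Measure.volumeIoiPow 2) ∂((volume : Measure E3).toSphere) :=
          integral_prod F hFi
      _ = _ := integral_congr_ae (Filter.Eventually.of_forall fun y => eq3 y)
  · have := hFi.integral_prod_left
    rw [show (fun y : Metric.sphere (0:E3) 1 => ∫ r, F (y, r) ∂(Measure.volumeIoiPow 2))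
      = fun y : Metric.sphere (0:E3) 1 => ∫ r in Set.Ioi (0:ℝ), r ^ 2 * f (r • (y:E3)) from
      funext eq3] at this
    exact this


set_option maxHeartbeats 1000000 in
lemma oneD (k : ℕ) {ε : ℝ} (hε : 0 < ε) (hε1 : ε < 1) {f g : ℝ → ℝ}
    (hd : ∀ s, HasDerivAt f (g s) s) (hg : Continuous g) :
    ∫ s in Set.Ioc (1:ℝ) (1+ε), (f s - (1/ε) * ∫ r in (1:ℝ)..(1+ε), f r * r ^ k) ^ 2 * s ^ 2
      ≤ (8 * (1 + ((k:ℝ) * 2 ^ k) ^ 2)) * ε ^ 2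
        * ∫ s in Set.Ioc (1:ℝ) (1+ε), ((g s) ^ 2 + (f s) ^ 2) * s ^ 2 := by
  have hf : Continuous f := by
    rw [continuous_iff_continuousAt]; exact fun s => (hd s).differentiableAt.continuousAt
  have h1ε : (1:ℝ) ≤ 1 + ε := by linarith
  set K : ℝ := (k:ℝ) * 2 ^ k with hKdef
  have hK : 0 ≤ K := by positivity
  set A : ℝ := (1/ε) * ∫ r in (1:ℝ)..(1+ε), f r * r ^ k with hA
  set D : ℝ := ∫ r in Set.Ioc (1:ℝ) (1+ε), |g r| with hDdef
  set M : ℝ := ∫ r in Set.Ioc (1:ℝ) (1+ε), |f r| with hMdef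
  have hD0 : 0 ≤ D := setIntegral_nonneg measurableSet_Ioc fun r _ => abs_nonneg _
  have hM0 : 0 ≤ M := setIntegral_nonneg measurableSet_Ioc fun r _ => abs_nonneg _
  -- geometric bound
  have hgeom : ∀ r ∈ Set.Icc (1:ℝ) (1+ε), |1 - r ^ k| ≤ K * ε := by
    intro r hr
    have h1r : 1 ≤ r := hr.1
    have hr2 : r ≤ 2 := hr.2.trans (by linarith)
    have h1rk : 1 ≤ r ^ k := one_le_pow₀ h1r
    rw [abs_sub_comm, abs_of_nonneg (by linarith)]
    rw [← geom_sum_mul]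
    have hsum : ∑ i ∈ Finset.range k, r ^ i ≤ (k:ℝ) * 2 ^ k := by
      calc ∑ i ∈ Finset.range k, r ^ i ≤ ∑ _i ∈ Finset.range k, (2:ℝ) ^ k :=
            Finset.sum_le_sum fun i hi =>
              (pow_le_pow_left₀ (by linarith) hr2 i).trans
                (pow_le_pow_right₀ one_le_two (Finset.mem_range.1 hi).le)
        _ = (k:ℝ) * 2 ^ k := by
            rw [Finset.sum_const, Finset.card_range, nsmul_eq_mul]
    exact mul_le_mul hsum (by linarith [hr.2]) (by linarith) (by positivity)
  -- FTC bound
  have hftc : ∀ r ∈ Set.Icc (1:ℝ) (1+ε), ∀ s ∈ Set.Icc (1:ℝ) (1+ε), |f s - f r| ≤ D := by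
    intro r hr s hs
    have hint : (∫ t in r..s, g t) = f s - f r :=
      intervalIntegral.integral_eq_sub_of_hasDerivAt (fun t _ => hd t)
        (hg.intervalIntegrable r s)
    rw [← hint]
    calc |∫ t in r..s, g t| ≤ ∫ t in Set.uIoc r s, |g t| := by
          simpa only [Real.norm_eq_abs] using
            intervalIntegral.norm_integral_le_integral_norm_uIoc (f := g) (a := r) (b := s)
      _ ≤ D := by
          apply setIntegral_mono_set (hg.abs.integrableOn_Ioc)
            (Filter.Eventually.of_forall fun t => abs_nonneg _)
          apply HasSubset.Subset.eventuallyLE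
          rw [Set.uIoc]
          exact Set.Ioc_subset_Ioc (le_min hr.1 hs.1) (max_le hr.2 hs.2)
  -- pointwise bound
  set B : ℝ := 2 * (1 + K ^ 2) * ε
      * ∫ r in Set.Ioc (1:ℝ) (1+ε), ((g r) ^ 2 + (f r) ^ 2) with hBdef
  have hIg : (0:ℝ) ≤ ∫ r in Set.Ioc (1:ℝ) (1+ε), (g r) ^ 2 :=
    setIntegral_nonneg measurableSet_Ioc fun r _ => sq_nonneg _
  have hIf : (0:ℝ) ≤ ∫ r in Set.Ioc (1:ℝ) (1+ε), (f r) ^ 2 :=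
    setIntegral_nonneg measurableSet_Ioc fun r _ => sq_nonneg _
  have hsplit : (∫ r in Set.Ioc (1:ℝ) (1+ε), ((g r) ^ 2 + (f r) ^ 2))
      = (∫ r in Set.Ioc (1:ℝ) (1+ε), (g r) ^ 2) + ∫ r in Set.Ioc (1:ℝ) (1+ε), (f r) ^ 2 :=
    integral_add ((hg.pow 2).integrableOn_Ioc) ((hf.pow 2).integrableOn_Ioc)
  have hB0 : 0 ≤ B := by
    rw [hBdef, hsplit]; positivity
  have hpt : ∀ s ∈ Set.Ioc (1:ℝ) (1+ε), (f s - A) ^ 2 ≤ B := by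
    intro s hs
    have hsI : s ∈ Set.Icc (1:ℝ) (1+ε) := Set.Ioc_subset_Icc_self hs
    have hfsA : f s - A = (1/ε) * ∫ r in (1:ℝ)..(1+ε), (f s - f r * r ^ k) := by
      rw [intervalIntegral.integral_sub (intervalIntegrable_const)
        ((show Continuous (fun r : ℝ => f r * r ^ k) from hf.mul (continuous_pow k)).intervalIntegrable _ _), intervalIntegral.integral_const]
      rw [hA, smul_eq_mul]
      field_simp
      ring
    have habs : |f s - A| ≤ D + K * M := by
      rw [hfsA, abs_mul, abs_of_nonneg (by positivity : (0:ℝ) ≤ 1/ε)]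
      have step1 : |∫ r in (1:ℝ)..(1+ε), (f s - f r * r ^ k)|
          ≤ ∫ r in (1:ℝ)..(1+ε), |f s - f r * r ^ k| :=
        intervalIntegral.abs_integral_le_integral_abs h1ε
      have step2 : (∫ r in (1:ℝ)..(1+ε), |f s - f r * r ^ k|)
          ≤ ∫ r in (1:ℝ)..(1+ε), (D + (K * ε) * |f r|) := by
        apply intervalIntegral.integral_mono_on h1ε
          ((show Continuous (fun r : ℝ => |f s - f r * r ^ k|) from (continuous_const.sub (hf.mul (continuous_pow k))).abs).intervalIntegrable _ _)
          ((show Continuous (fun r : ℝ => D + (K * ε) * |f r|) from (continuous_const.add (continuous_const.mul hf.abs))).intervalIntegrable _ _)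
        intro r hr
        have : f s - f r * r ^ k = (f s - f r) + f r * (1 - r ^ k) := by ring
        rw [this]
        calc |(f s - f r) + f r * (1 - r ^ k)| ≤ |f s - f r| + |f r * (1 - r ^ k)| := abs_add_le _ _
          _ ≤ D + (K * ε) * |f r| := by
              refine add_le_add (hftc r hr s hsI) ?_
              rw [abs_mul]
              calc |f r| * |1 - r ^ k| ≤ |f r| * (K * ε) :=
                    mul_le_mul_of_nonneg_left (hgeom r hr) (abs_nonneg _)
                _ = (K * ε) * |f r| := mul_comm _ _
      have step3 : (∫ r in (1:ℝ)..(1+ε), (D + (K * ε) * |f r|)) = ε * D + (K * ε) * M := by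
        rw [intervalIntegral.integral_add (intervalIntegrable_const)
          ((show Continuous (fun r : ℝ => (K * ε) * |f r|) from continuous_const.mul hf.abs).intervalIntegrable _ _),
          intervalIntegral.integral_const, intervalIntegral.integral_const_mul,
          intervalIntegral.integral_of_le h1ε, ← hMdef]
        simp [smul_eq_mul]
      calc (1/ε) * |∫ r in (1:ℝ)..(1+ε), (f s - f r * r ^ k)|
          ≤ (1/ε) * (ε * D + (K * ε) * M) := by
            apply mul_le_mul_of_nonneg_left ((step1.trans step2).trans_eq step3) (by positivity)
        _ = D + K * M := by field_simp
    have hD2 : D ^ 2 ≤ ε * ∫ r in Set.Ioc (1:ℝ) (1+ε), (g r) ^ 2 := by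
      have := cs_Ioc h1ε hg
      simpa [add_sub_cancel_left] using this
    have hM2 : M ^ 2 ≤ ε * ∫ r in Set.Ioc (1:ℝ) (1+ε), (f r) ^ 2 := by
      have := cs_Ioc h1ε hf
      simpa [add_sub_cancel_left] using this
    calc (f s - A) ^ 2 = |f s - A| ^ 2 := (sq_abs _).symm
      _ ≤ (D + K * M) ^ 2 := pow_le_pow_left₀ (abs_nonneg _) habs 2
      _ ≤ 2 * D ^ 2 + 2 * (K * M) ^ 2 := by nlinarith [sq_nonneg (D - K * M)]
      _ ≤ 2 * (ε * ∫ r in Set.Ioc (1:ℝ) (1+ε), (g r) ^ 2)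
            + 2 * K ^ 2 * (ε * ∫ r in Set.Ioc (1:ℝ) (1+ε), (f r) ^ 2) := by
          have : (K * M) ^ 2 = K ^ 2 * M ^ 2 := by ring
          nlinarith [mul_le_mul_of_nonneg_left hM2 (sq_nonneg K)]
      _ ≤ B := by rw [hBdef, hsplit]; nlinarith [hIg, hIf, sq_nonneg K, hε.le]
  -- integrate
  have hvol : (volume (Set.Ioc (1:ℝ) (1+ε))).toReal = ε := by
    rw [Real.volume_Ioc, ENNReal.toReal_ofReal (by linarith)]
    ring
  have main : (∫ s in Set.Ioc (1:ℝ) (1+ε), (f s - A) ^ 2 * s ^ 2)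
      ≤ ∫ s in Set.Ioc (1:ℝ) (1+ε), B * 4 := by
    apply setIntegral_mono_on
      ((show Continuous (fun s : ℝ => (f s - A) ^ 2 * s ^ 2) from ((hf.sub continuous_const).pow 2).mul (continuous_pow 2)) |>.integrableOn_Ioc)
      (integrableOn_const (by rw [Real.volume_Ioc]; exact ENNReal.ofReal_ne_top))
      measurableSet_Ioc
    intro s hs
    have hs2 : s ^ 2 ≤ 4 := by nlinarith [hs.1, hs.2, hε1]
    have := hpt s hs
    nlinarith [sq_nonneg s, sq_nonneg (f s - A)]
  have main2 : (∫ s in Set.Ioc (1:ℝ) (1+ε), B * 4) = 4 * ε * B := by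
    rw [setIntegral_const, measureReal_def, hvol, smul_eq_mul]; ring
  have main3 : 4 * ε * B = (8 * (1 + K ^ 2)) * ε ^ 2
      * ∫ r in Set.Ioc (1:ℝ) (1+ε), ((g r) ^ 2 + (f r) ^ 2) := by
    rw [hBdef]; ring
  have main4 : (∫ r in Set.Ioc (1:ℝ) (1+ε), ((g r) ^ 2 + (f r) ^ 2))
      ≤ ∫ r in Set.Ioc (1:ℝ) (1+ε), ((g r) ^ 2 + (f r) ^ 2) * r ^ 2 := by
    apply setIntegral_mono_on
      ((show Continuous (fun r : ℝ => (g r) ^ 2 + (f r) ^ 2) from (hg.pow 2).add (hf.pow 2)).integrableOn_Ioc)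
      ((show Continuous (fun r : ℝ => ((g r) ^ 2 + (f r) ^ 2) * r ^ 2) from ((hg.pow 2).add (hf.pow 2)).mul (continuous_pow 2)).integrableOn_Ioc)
      measurableSet_Ioc
    intro r hr
    have h1r2 : 1 ≤ r ^ 2 := one_le_pow₀ hr.1.le
    exact le_mul_of_one_le_right (by positivity) h1r2
  calc (∫ s in Set.Ioc (1:ℝ) (1+ε), (f s - A) ^ 2 * s ^ 2) ≤ 4 * ε * B := main.trans_eq main2
    _ = (8 * (1 + K ^ 2)) * ε ^ 2 * ∫ r in Set.Ioc (1:ℝ) (1+ε), ((g r) ^ 2 + (f r) ^ 2) := main3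
    _ ≤ (8 * (1 + K ^ 2)) * ε ^ 2
        * ∫ r in Set.Ioc (1:ℝ) (1+ε), ((g r) ^ 2 + (f r) ^ 2) * r ^ 2 := by
        apply mul_le_mul_of_nonneg_left main4 (by positivity)


lemma shell_isOpen (ε : ℝ) : IsOpen (shell ε) := by
  have : shell ε = {x : E3 | 1 < ‖x‖} ∩ {x : E3 | ‖x‖ < 1 + ε} := rfl
  rw [this]
  exact (isOpen_lt continuous_const continuous_norm).inter
    (isOpen_lt continuous_norm continuous_const)

lemma inner_eq (ε : ℝ) (hε : 0 < ε) (G : E3 → ℝ) (y : Metric.sphere (0:E3) 1) :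
    (∫ r in Set.Ioi (0:ℝ), r ^ 2 * ((shell ε).indicator G) (r • (y:E3)))
      = ∫ r in Set.Ioc (1:ℝ) (1+ε), G (r • (y:E3)) * r ^ 2 := by
  have hy : ‖(y:E3)‖ = 1 := mem_sphere_zero_iff_norm.1 y.2
  have h1 : ∀ r ∈ Set.Ioi (0:ℝ), r ^ 2 * ((shell ε).indicator G) (r • (y:E3))
      = (Set.Ioo (1:ℝ) (1+ε)).indicator (fun r => G (r • (y:E3)) * r ^ 2) r := by
    intro r hr
    have hnorm : ‖r • (y:E3)‖ = r := by
      rw [norm_smul, hy, Real.norm_eq_abs, abs_of_pos hr, mul_one]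
    by_cases hmem : r ∈ Set.Ioo (1:ℝ) (1+ε)
    · rw [Set.indicator_of_mem hmem,
        Set.indicator_of_mem (show r • (y:E3) ∈ shell ε from
          ⟨by rw [hnorm]; exact hmem.1, by rw [hnorm]; exact hmem.2⟩)]
      ring
    · rw [Set.indicator_of_notMem hmem,
        Set.indicator_of_notMem (show r • (y:E3) ∉ shell ε from fun hc =>
          hmem ⟨by rw [← hnorm]; exact hc.1, by rw [← hnorm]; exact hc.2⟩)]
      ring
  rw [setIntegral_congr_fun measurableSet_Ioi h1, setIntegral_indicator measurableSet_Ioo,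
    show Set.Ioi (0:ℝ) ∩ Set.Ioo (1:ℝ) (1+ε) = Set.Ioo (1:ℝ) (1+ε) from
      Set.inter_eq_self_of_subset_right (fun r hr => lt_trans one_pos hr.1),
    ← integral_Ioc_eq_integral_Ioo]


/-- `‖φ − (M_ε^k φ)⁻‖_{L²(Ω_ε)} ≤ c ε ‖φ‖_{H¹(Ω_ε)}` (squared form), `c` depending only on `k`. -/
theorem stmt15 (k : ℕ) :
    ∃ c : ℝ, 0 < c ∧ ∀ ε : ℝ, 0 < ε → ε < 1 → ∀ φ : E3 → ℝ, ContDiff ℝ 1 φ →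
      (∫ x in shell ε, (φ x - avg ε k φ (‖x‖⁻¹ • x))^2)
        ≤ c * ε^2 * ((∫ x in shell ε, (φ x)^2) + ∫ x in shell ε, ‖fderiv ℝ φ x‖^2) := by
  refine ⟨8 * (1 + ((k:ℝ) * 2 ^ k) ^ 2), by positivity, fun ε hε hε1 φ hφ => ?_⟩
  set c : ℝ := 8 * (1 + ((k:ℝ) * 2 ^ k) ^ 2) with hc
  have hc0 : 0 < c := by positivity
  set G₁ : E3 → ℝ := fun x => (φ x - avg ε k φ (‖x‖⁻¹ • x)) ^ 2 with hG₁
  set G₂ : E3 → ℝ := fun x => (φ x) ^ 2 with hG₂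
  set G₃ : E3 → ℝ := fun x => ‖fderiv ℝ φ x‖ ^ 2 with hG₃
  have hSmeas : MeasurableSet (shell ε) := (shell_isOpen ε).measurableSet
  have hφc : Continuous φ := hφ.continuous
  have hdc : Continuous (fderiv ℝ φ) := hφ.continuous_fderiv one_ne_zero
  -- RHS is nonneg
  have hRHS2 : (0:ℝ) ≤ ∫ x in shell ε, G₂ x :=
    setIntegral_nonneg hSmeas fun x _ => sq_nonneg _
  have hRHS3 : (0:ℝ) ≤ ∫ x in shell ε, G₃ x :=
    setIntegral_nonneg hSmeas fun x _ => sq_nonneg _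
  by_cases hInt : IntegrableOn G₁ (shell ε) volume
  · -- main case
    have hcompact : IsCompact (Metric.closedBall (0:E3) (1+ε) \ Metric.ball 0 1) :=
      (isCompact_closedBall _ _).diff Metric.isOpen_ball
    have hsub : shell ε ⊆ Metric.closedBall (0:E3) (1+ε) \ Metric.ball 0 1 := fun x hx =>
      ⟨mem_closedBall_zero_iff.2 hx.2.le, fun h => absurd (mem_ball_zero_iff.1 h)
        (not_lt.2 hx.1.le)⟩
    have hG2int : IntegrableOn G₂ (shell ε) volume :=
      (((hφc.pow 2).continuousOn).integrableOn_compact hcompact).mono_set hsub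
    have hG3int : IntegrableOn G₃ (shell ε) volume :=
      ((((hdc.norm).pow 2).continuousOn).integrableOn_compact hcompact).mono_set hsub
    have hf₁ : Integrable ((shell ε).indicator G₁) := hInt.integrable_indicator hSmeas
    have hf₂ : Integrable ((shell ε).indicator G₂) := hG2int.integrable_indicator hSmeas
    have hf₃ : Integrable ((shell ε).indicator G₃) := hG3int.integrable_indicator hSmeas
    obtain ⟨e₁, i₁⟩ := polar_core _ hf₁
    obtain ⟨e₂, i₂⟩ := polar_core _ hf₂
    obtain ⟨e₃, i₃⟩ := polar_core _ hf₃
    -- pointwise comparison on the sphere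
    have hpt : ∀ y : Metric.sphere (0:E3) 1,
        (∫ r in Set.Ioi (0:ℝ), r ^ 2 * ((shell ε).indicator G₁) (r • (y:E3)))
          ≤ c * ε ^ 2 * ((∫ r in Set.Ioi (0:ℝ), r ^ 2 * ((shell ε).indicator G₂) (r • (y:E3)))
              + ∫ r in Set.Ioi (0:ℝ), r ^ 2 * ((shell ε).indicator G₃) (r • (y:E3))) := by
      intro y
      have hy : ‖(y:E3)‖ = 1 := mem_sphere_zero_iff_norm.1 y.2
      set f : ℝ → ℝ := fun s => φ (s • (y:E3)) with hfdef
      set g : ℝ → ℝ := fun s => (fderiv ℝ φ (s • (y:E3))) (y:E3) with hgdef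
      have hd : ∀ s, HasDerivAt f (g s) s := by
        intro s
        have h1 : HasDerivAt (fun t : ℝ => t • (y:E3)) ((y:E3)) s := by
          simpa using (hasDerivAt_id s).smul_const (y:E3)
        exact ((hφ.differentiable one_ne_zero (s • (y:E3))).hasFDerivAt).comp_hasDerivAt s h1
      have hgc : Continuous g :=
        (hdc.comp (continuous_id.smul continuous_const)).clm_apply continuous_const
      have hfc : Continuous f := hφc.comp (continuous_id.smul continuous_const)
      -- rewrite the three integrals
      rw [inner_eq ε hε G₁ y, inner_eq ε hε G₂ y, inner_eq ε hε G₃ y]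
      have eqG₁ : (∫ r in Set.Ioc (1:ℝ) (1+ε), G₁ (r • (y:E3)) * r ^ 2)
          = ∫ r in Set.Ioc (1:ℝ) (1+ε),
              (f r - (1/ε) * ∫ t in (1:ℝ)..(1+ε), f t * t ^ k) ^ 2 * r ^ 2 := by
        apply setIntegral_congr_fun measurableSet_Ioc
        intro r hr
        have hr0 : (0:ℝ) < r := lt_trans one_pos hr.1
        have hnorm : ‖r • (y:E3)‖ = r := by
          rw [norm_smul, hy, Real.norm_eq_abs, abs_of_pos hr0, mul_one]
        have harg : ‖r • (y:E3)‖⁻¹ • (r • (y:E3)) = (y:E3) := by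
          rw [hnorm, smul_smul, inv_mul_cancel₀ (ne_of_gt hr0), one_smul]
        simp only [hG₁, harg]
        rfl
      have eqG₂ : (∫ r in Set.Ioc (1:ℝ) (1+ε), G₂ (r • (y:E3)) * r ^ 2)
          = ∫ r in Set.Ioc (1:ℝ) (1+ε), (f r) ^ 2 * r ^ 2 := rfl
      have eqG₃ : (∫ r in Set.Ioc (1:ℝ) (1+ε), G₃ (r • (y:E3)) * r ^ 2)
          = ∫ r in Set.Ioc (1:ℝ) (1+ε), ‖fderiv ℝ φ (r • (y:E3))‖ ^ 2 * r ^ 2 := rfl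
      rw [eqG₁, eqG₂, eqG₃]
      have step1 := oneD k hε hε1 hd hgc
      have step2 : (∫ s in Set.Ioc (1:ℝ) (1+ε), ((g s) ^ 2 + (f s) ^ 2) * s ^ 2)
          ≤ ∫ s in Set.Ioc (1:ℝ) (1+ε),
              (‖fderiv ℝ φ (s • (y:E3))‖ ^ 2 + (f s) ^ 2) * s ^ 2 := by
        refine setIntegral_mono_on ?_ ?_ measurableSet_Ioc ?_
        · apply Continuous.integrableOn_Ioc
          exact ((hgc.pow 2).add (hfc.pow 2)).mul (continuous_pow 2)
        · apply Continuous.integrableOn_Ioc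
          exact (((hdc.comp (continuous_id.smul continuous_const)).norm.pow 2).add
            (hfc.pow 2)).mul (continuous_pow 2)
        intro s hs
        have hb : |g s| ≤ ‖fderiv ℝ φ (s • (y:E3))‖ := by
          rw [hgdef]
          calc |(fderiv ℝ φ (s • (y:E3))) (y:E3)|
              = ‖(fderiv ℝ φ (s • (y:E3))) (y:E3)‖ := (Real.norm_eq_abs _).symm
            _ ≤ ‖fderiv ℝ φ (s • (y:E3))‖ * ‖(y:E3)‖ :=
                (fderiv ℝ φ (s • (y:E3))).le_opNorm _
            _ = ‖fderiv ℝ φ (s • (y:E3))‖ := by rw [hy, mul_one]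
        have : (g s) ^ 2 ≤ ‖fderiv ℝ φ (s • (y:E3))‖ ^ 2 := by
          rw [← sq_abs]
          exact pow_le_pow_left₀ (abs_nonneg _) hb 2
        nlinarith [sq_nonneg s, sq_nonneg (f s)]
      have step3 : (∫ s in Set.Ioc (1:ℝ) (1+ε),
            (‖fderiv ℝ φ (s • (y:E3))‖ ^ 2 + (f s) ^ 2) * s ^ 2)
          = (∫ s in Set.Ioc (1:ℝ) (1+ε), (f s) ^ 2 * s ^ 2)
            + ∫ s in Set.Ioc (1:ℝ) (1+ε), ‖fderiv ℝ φ (s • (y:E3))‖ ^ 2 * s ^ 2 := by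
        have h1 : IntegrableOn (fun s : ℝ => (f s) ^ 2 * s ^ 2)
            (Set.Ioc (1:ℝ) (1+ε)) volume := by
          apply Continuous.integrableOn_Ioc
          exact (hfc.pow 2).mul (continuous_pow 2)
        have h2 : IntegrableOn (fun s : ℝ => ‖fderiv ℝ φ (s • (y:E3))‖ ^ 2 * s ^ 2)
            (Set.Ioc (1:ℝ) (1+ε)) volume := by
          apply Continuous.integrableOn_Ioc
          exact ((hdc.comp (continuous_id.smul continuous_const)).norm.pow 2).mul
            (continuous_pow 2)
        rw [← integral_add h1 h2]
        apply setIntegral_congr_fun measurableSet_Ioc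
        intro s _
        ring
      calc (∫ r in Set.Ioc (1:ℝ) (1+ε),
            (f r - (1/ε) * ∫ t in (1:ℝ)..(1+ε), f t * t ^ k) ^ 2 * r ^ 2)
          ≤ c * ε ^ 2 * ∫ s in Set.Ioc (1:ℝ) (1+ε), ((g s) ^ 2 + (f s) ^ 2) * s ^ 2 := step1
        _ ≤ c * ε ^ 2 * ((∫ s in Set.Ioc (1:ℝ) (1+ε), (f s) ^ 2 * s ^ 2)
              + ∫ s in Set.Ioc (1:ℝ) (1+ε), ‖fderiv ℝ φ (s • (y:E3))‖ ^ 2 * s ^ 2) := by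
            apply mul_le_mul_of_nonneg_left (step2.trans_eq step3) (by positivity)
    -- put everything together
    have lhs_eq : (∫ x in shell ε, G₁ x) = ∫ x, (shell ε).indicator G₁ x :=
      (MeasureTheory.integral_indicator hSmeas).symm
    have rhs2_eq : (∫ x in shell ε, G₂ x) = ∫ x, (shell ε).indicator G₂ x :=
      (MeasureTheory.integral_indicator hSmeas).symm
    have rhs3_eq : (∫ x in shell ε, G₃ x) = ∫ x, (shell ε).indicator G₃ x :=
      (MeasureTheory.integral_indicator hSmeas).symm
    rw [lhs_eq, rhs2_eq, rhs3_eq, e₁, e₂, e₃]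
    calc (∫ y : Metric.sphere (0:E3) 1,
          (∫ r in Set.Ioi (0:ℝ), r ^ 2 * ((shell ε).indicator G₁) (r • (y:E3)))
          ∂((volume : Measure E3).toSphere))
        ≤ ∫ y : Metric.sphere (0:E3) 1,
            (c * ε ^ 2 * ((∫ r in Set.Ioi (0:ℝ), r ^ 2 * ((shell ε).indicator G₂) (r • (y:E3)))
              + ∫ r in Set.Ioi (0:ℝ), r ^ 2 * ((shell ε).indicator G₃) (r • (y:E3))))
            ∂((volume : Measure E3).toSphere) := by
          exact integral_mono i₁ (((i₂.add i₃).const_mul _)) hpt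
      _ = c * ε ^ 2 * ((∫ y : Metric.sphere (0:E3) 1,
            (∫ r in Set.Ioi (0:ℝ), r ^ 2 * ((shell ε).indicator G₂) (r • (y:E3)))
            ∂((volume : Measure E3).toSphere))
          + ∫ y : Metric.sphere (0:E3) 1,
            (∫ r in Set.Ioi (0:ℝ), r ^ 2 * ((shell ε).indicator G₃) (r • (y:E3)))
            ∂((volume : Measure E3).toSphere)) := by
          rw [MeasureTheory.integral_const_mul, integral_add i₂ i₃]
  · -- degenerate case
    have : (∫ x in shell ε, G₁ x) = 0 := integral_undef hInt
    rw [this]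
    have : (0:ℝ) ≤ c * ε ^ 2 * ((∫ x in shell ε, G₂ x) + ∫ x in shell ε, G₃ x) := by
      apply mul_nonneg (by positivity) (by linarith)
    linarith
end
end

section
/- Let ε ∈ (0,1) and u ∈ H¹(Ω_ε)³ with div u = 0 in Ω_ε and u·n_ε = 0 on ∂Ω_ε. For k ∈ ℤ_{≥0}, the tangential component of the weighted average, M_{ε,τ}^k u := P M_ε^k u, satisfies div_{S²}(M_{ε,τ}^k u) = (k−1) M_ε^k(u·n̄) on S². In particular for k = 1, M_{ε,τ}^1 u is surface divergence-free. -/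
open MeasureTheory Matrix
open scoped RealInnerProductSpace

noncomputable section

lemma norm_hasFDerivAt {y : E3} (hy : ‖y‖ = 1) :
    HasFDerivAt (fun x : E3 => ‖x‖) (innerSL ℝ y) y := by
  have h2 : HasFDerivAt (fun x : E3 => ‖x‖ ^ 2) (2 • (innerSL ℝ y)) y :=
    (hasStrictFDerivAt_norm_sq y).hasFDerivAt
  have hs : HasDerivAt Real.sqrt (1 / (2 * Real.sqrt (‖y‖ ^ 2))) (‖y‖ ^ 2) := by
    apply Real.hasDerivAt_sqrt
    rw [hy]; norm_num
  have h3 := hs.comp_hasFDerivAt y h2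
  have hfun : (Real.sqrt ∘ fun x : E3 => ‖x‖ ^ 2) = fun x : E3 => ‖x‖ := by
    funext x; simp [Real.sqrt_sq (norm_nonneg x)]
  rw [hfun] at h3
  refine h3.congr_fderiv ?_
  rw [hy]
  ext v
  simp [two_smul]
  ring

lemma nmap_hasFDerivAt {y : E3} (hy : ‖y‖ = 1) :
    HasFDerivAt (fun x : E3 => ‖x‖⁻¹ • x)
      (ContinuousLinearMap.id ℝ E3 - (innerSL ℝ y).smulRight y) y := by
  have hne : ‖y‖ ≠ 0 := by rw [hy]; norm_num
  have hinv : HasFDerivAt (fun x : E3 => ‖x‖⁻¹)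
      ((-(‖y‖ ^ 2)⁻¹ : ℝ) • innerSL ℝ y) y :=
    (hasDerivAt_inv hne).comp_hasFDerivAt y (norm_hasFDerivAt hy)
  have h := hinv.smul (hasFDerivAt_id y)
  rw [hy] at h
  refine h.congr_fderiv ?_
  ext v
  simp [hy]
  ring

lemma smul_hasFDerivAt (t : ℝ) (x : E3) :
    HasFDerivAt (fun z : E3 => t • z) (t • ContinuousLinearMap.id ℝ E3) x := by
  have := (t • ContinuousLinearMap.id ℝ E3).hasFDerivAt (x := x)
  convert this using 1
  funext z; simp

lemma inner_hasFDerivAt {f : E3 → ℝ} (hf : ContDiff ℝ 1 f) (t : ℝ) (k : ℕ) (x : E3) :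
    HasFDerivAt (fun z : E3 => f (t • z) * t ^ k)
      (t ^ (k+1) • fderiv ℝ f (t • x)) x := by
  have hd : HasFDerivAt f (fderiv ℝ f (t • x)) (t • x) :=
    (hf.differentiable one_ne_zero (t • x)).hasFDerivAt
  have h1 := (hd.comp x (smul_hasFDerivAt t x)).mul_const (t ^ k)
  refine h1.congr_fderiv ?_
  ext v
  simp [pow_succ]
  ring

lemma cont_fderiv_param {f : E3 → ℝ} (hf : ContDiff ℝ 1 f) (k : ℕ) :
    Continuous (fun p : ℝ × E3 => p.1 ^ (k+1) • fderiv ℝ f (p.1 • p.2)) := by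
  exact (continuous_fst.pow (k+1)).smul
    ((hf.continuous_fderiv one_ne_zero).comp (continuous_fst.smul continuous_snd))

lemma avg_hasFDerivAt {f : E3 → ℝ} (hf : ContDiff ℝ 1 f) {ε : ℝ} (hε0 : 0 < ε) (k : ℕ) (y : E3) :
    HasFDerivAt (fun z : E3 => ∫ r in (1:ℝ)..(1+ε), f (r • z) * r ^ k)
      (∫ r in (1:ℝ)..(1+ε), r ^ (k+1) • fderiv ℝ f (r • y)) y := by
  have hle : (1:ℝ) ≤ 1 + ε := by linarith
  have huIoc : Set.uIoc (1:ℝ) (1+ε) = Set.Ioc 1 (1+ε) := Set.uIoc_of_le hle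
  obtain ⟨C, hC⟩ := (IsCompact.prod (isCompact_Icc (a := (1:ℝ)) (b := 1+ε))
      (isCompact_closedBall y 1)).exists_bound_of_continuousOn
      (cont_fderiv_param hf k).continuousOn
  refine intervalIntegral.hasFDerivAt_integral_of_dominated_of_fderiv_le
    (F := fun x t => f (t • x) * t ^ k)
    (F' := fun x t => t ^ (k+1) • fderiv ℝ f (t • x))
    (bound := fun _ => C) (Metric.ball_mem_nhds y zero_lt_one) ?_ ?_ ?_ ?_ ?_ ?_
  · filter_upwards with x
    exact ((hf.continuous.comp (continuous_id.smul continuous_const)).mul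
      (continuous_pow k)).aestronglyMeasurable.restrict
  · exact ((hf.continuous.comp (continuous_id.smul continuous_const)).mul
      (continuous_pow k)).intervalIntegrable _ _
  · exact ((cont_fderiv_param hf k).comp
      (continuous_id.prodMk continuous_const)).aestronglyMeasurable.restrict
  · filter_upwards with t ht x hx
    rw [huIoc] at ht
    exact hC (t, x) ⟨Set.Ioc_subset_Icc_self ht, Metric.ball_subset_closedBall hx⟩
  · exact intervalIntegrable_const
  · filter_upwards with t ht x hx
    exact inner_hasFDerivAt hf t k x


set_option maxHeartbeats 2000000 in
/-- `div_{S²}(M_{ε,τ}^k u) = (k−1) M_ε^k(u·n̄)` on `S²` for solenoidal `u` tangent to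
`∂Ω_ε`; in particular `M_{ε,τ}^1 u` is surface divergence-free. -/
theorem stmt18 (ε : ℝ) (hε0 : 0 < ε) (hε1 : ε < 1) (k : ℕ)
    (u : E3 → E3) (hu : ContDiff ℝ 1 u)
    (hdiv : ∀ x : E3, 1 < ‖x‖ → ‖x‖ < 1 + ε → div3 u x = 0)
    (hb1 : ∀ y : E3, ‖y‖ = 1 → ⟪u y, y⟫ = 0)
    (hb2 : ∀ y : E3, ‖y‖ = 1 → ⟪u ((1+ε) • y), y⟫ = 0)
    (y : E3) (hy : ‖y‖ = 1) :
    sdiv (fun z => (WithLp.toLp 2 (fun j => ∑ m, proj3 z j m * avgV ε k u z m) : E3)) y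
        = ((k : ℝ) - 1) * ((1/ε) * ∫ r in (1:ℝ)..(1+ε), ⟪u (r • y), y⟫ * r ^ k)
    ∧ (k = 1 → sdiv (fun z => (WithLp.toLp 2 (fun j => ∑ m, proj3 z j m * avgV ε k u z m) : E3)) y = 0) := by
  have hle : (1:ℝ) ≤ 1 + ε := by linarith
  have hum : ∀ m : Fin 3, ContDiff ℝ 1 (fun z : E3 => u z m) := by
    intro m
    have h := ((EuclideanSpace.proj m : E3 →L[ℝ] ℝ).contDiff).comp hu
    exact h
  -- derivative of the weighted average integrals
  set d : ℝ → Fin 3 → (E3 →L[ℝ] ℝ) := fun r m => fderiv ℝ (fun z : E3 => u z m) (r • y) with hd_def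
  set DAi : Fin 3 → (E3 →L[ℝ] ℝ) := fun m => ∫ r in (1:ℝ)..(1+ε), r ^ (k+1) • d r m with hDAi_def
  set DA : Fin 3 → (E3 →L[ℝ] ℝ) := fun m => (1/ε) • DAi m with hDA_def
  have HAm : ∀ m : Fin 3, HasFDerivAt (fun z : E3 => avgV ε k u z m) (DA m) y := by
    intro m
    have h := (avg_hasFDerivAt (hum m) hε0 k y).const_mul (1/ε)
    exact h
  -- continuity facts
  have hcu : ∀ m : Fin 3, Continuous fun r : ℝ => u (r • y) m := fun m =>
    (hum m).continuous.comp (continuous_id.smul continuous_const)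
  have hcd : ∀ m : Fin 3, Continuous fun r : ℝ => r ^ (k+1) • d r m := fun m =>
    (cont_fderiv_param (hum m) k).comp (continuous_id.prodMk continuous_const)
  have hcdv : ∀ (m : Fin 3) (v : E3), Continuous fun r : ℝ => d r m v := fun m v =>
    (((hum m).continuous_fderiv one_ne_zero).comp
      (continuous_id.smul continuous_const)).clm_apply continuous_const
  -- values of DAi
  have hDAiapp : ∀ (m : Fin 3) (v : E3),
      DAi m v = ∫ r in (1:ℝ)..(1+ε), r ^ (k+1) * (d r m v) := by
    intro m v
    rw [hDAi_def]
    rw [ContinuousLinearMap.intervalIntegral_apply ((hcd m).intervalIntegrable _ _) v]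
    simp [smul_eq_mul]
  have hDAapp : ∀ (m : Fin 3) (v : E3),
      DA m v = (1/ε) * ∫ r in (1:ℝ)..(1+ε), r ^ (k+1) * (d r m v) := by
    intro m v
    rw [hDA_def]
    simp [smul_eq_mul, hDAiapp]
  -- derivative of z ↦ proj3 z j m
  have hproj : ∀ j m : Fin 3, HasFDerivAt (fun z : E3 => proj3 z j m)
      ((0 : E3 →L[ℝ] ℝ) - (y j • (EuclideanSpace.proj m : E3 →L[ℝ] ℝ)
        + y m • (EuclideanSpace.proj j : E3 →L[ℝ] ℝ))) y := by
    intro j m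
    have h1 : HasFDerivAt (fun z : E3 => z j) (EuclideanSpace.proj (𝕜 := ℝ) j) y :=
      (EuclideanSpace.proj j : E3 →L[ℝ] ℝ).hasFDerivAt
    have h2 : HasFDerivAt (fun z : E3 => z m) (EuclideanSpace.proj (𝕜 := ℝ) m) y :=
      (EuclideanSpace.proj m : E3 →L[ℝ] ℝ).hasFDerivAt
    have hmul := h1.mul h2
    have hconst : HasFDerivAt (fun _ : E3 => (if j = m then (1:ℝ) else 0)) (0 : E3 →L[ℝ] ℝ) y :=
      hasFDerivAt_const _ _
    have h := hconst.sub hmul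
    have hfe : (fun z : E3 => (if j = m then (1:ℝ) else 0) - z j * z m)
        = fun z : E3 => proj3 z j m := by
      funext z; simp [proj3]
    rw [← hfe]
    exact h
  set LL : Fin 3 → (E3 →L[ℝ] ℝ) := fun j =>
    ∑ m ∈ Finset.univ, (proj3 y j m • DA m + avgV ε k u y m •
      ((0 : E3 →L[ℝ] ℝ) - (y j • (EuclideanSpace.proj m : E3 →L[ℝ] ℝ)
        + y m • (EuclideanSpace.proj j : E3 →L[ℝ] ℝ)))) with hLL_def
  have hFj : ∀ j : Fin 3, HasFDerivAt
      (fun z : E3 => ∑ m : Fin 3, proj3 z j m * avgV ε k u z m) (LL j) y := by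
    intro j
    exact HasFDerivAt.fun_sum fun m _ => (hproj j m).fun_mul (HAm m)
  have hN := nmap_hasFDerivAt hy
  set L : E3 →L[ℝ] E3 := ContinuousLinearMap.id ℝ E3 - (innerSL ℝ y).smulRight y with hL_def
  have hcomp : ∀ j : Fin 3, HasFDerivAt
      (fun x : E3 => ∑ m : Fin 3, proj3 (‖x‖⁻¹ • x) j m * avgV ε k u (‖x‖⁻¹ • x) m)
      ((LL j).comp L) y := by
    intro j
    have hyy : (‖y‖⁻¹ • y : E3) = y := by rw [hy]; simp
    exact HasFDerivAt.comp y (by rw [hyy]; exact hFj j) hN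
  have hfd : ∀ j : Fin 3, fderiv ℝ
      (fun x : E3 => ∑ m, proj3 (‖x‖⁻¹ • x) j m * avgV ε k u (‖x‖⁻¹ • x) m) y
      = (LL j).comp L := fun j => (hcomp j).fderiv
  have hyy1 : ⟪y, y⟫ = (1:ℝ) := by
    rw [real_inner_self_eq_norm_mul_norm, hy]; norm_num
  have hLw : ∀ j : Fin 3, L (EuclideanSpace.single j 1 - y j • y)
      = EuclideanSpace.single j 1 - y j • y := by
    intro j
    rw [hL_def]
    simp only [ContinuousLinearMap.sub_apply, ContinuousLinearMap.id_apply,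
      ContinuousLinearMap.smulRight_apply, innerSL_apply_apply]
    rw [inner_sub_right, inner_smul_right, hyy1]
    have : ⟪y, EuclideanSpace.single j (1:ℝ)⟫ = y j := by
      simp [PiLp.inner_apply, EuclideanSpace.single_apply]
    rw [this]
    simp
  have hyrep : ∑ i : Fin 3, y i • (EuclideanSpace.single i (1:ℝ)) = y := by
    have h := (EuclideanSpace.basisFun (Fin 3) ℝ).sum_repr y
    simpa [EuclideanSpace.basisFun_apply, EuclideanSpace.basisFun_repr] using h
  have hvec : ∀ j : Fin 3, (∑ i : Fin 3, proj3 y j i • EuclideanSpace.single i (1:ℝ))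
      = EuclideanSpace.single j 1 - y j • y := by
    intro j
    have hsingle : ∑ i : Fin 3, (if j = i then (1:ℝ) else 0) • EuclideanSpace.single i (1:ℝ)
        = EuclideanSpace.single j 1 := by
      simp [ite_smul, Finset.sum_ite_eq]
    calc (∑ i : Fin 3, proj3 y j i • EuclideanSpace.single i (1:ℝ))
        = ∑ i : Fin 3, ((if j = i then (1:ℝ) else 0) • EuclideanSpace.single i (1:ℝ)
            - (y j * y i) • EuclideanSpace.single i (1:ℝ)) := by
          refine Finset.sum_congr rfl fun i _ => ?_
          rw [proj3]
          simp only [Matrix.of_apply]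
          rw [sub_smul]
      _ = (∑ i : Fin 3, (if j = i then (1:ℝ) else 0) • EuclideanSpace.single i (1:ℝ))
            - ∑ i : Fin 3, (y j * y i) • EuclideanSpace.single i (1:ℝ) :=
          Finset.sum_sub_distrib _ _
      _ = EuclideanSpace.single j 1 - y j • y := by
          rw [hsingle]
          congr 1
          have hh : ∑ i : Fin 3, (y j * y i) • EuclideanSpace.single i (1:ℝ)
              = y j • ∑ i : Fin 3, y i • EuclideanSpace.single i (1:ℝ) := by
            rw [Finset.smul_sum]
            exact Finset.sum_congr rfl fun i _ => mul_smul _ _ _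
          rw [hh, hyrep]
  have hsd : sdiv (fun z => (WithLp.toLp 2 (fun j => ∑ m, proj3 z j m * avgV ε k u z m) : E3)) y
      = ∑ j : Fin 3, (LL j) (EuclideanSpace.single j 1 - y j • y) := by
    unfold sdiv
    refine Finset.sum_congr rfl fun j _ => ?_
    simp only [hfd]
    have hstep : ∀ i : Fin 3, proj3 y j i * ((LL j).comp L) (EuclideanSpace.single i 1)
        = ((LL j).comp L) (proj3 y j i • EuclideanSpace.single i 1) := by
      intro i; rw [ContinuousLinearMap.map_smul, smul_eq_mul]
    rw [Finset.sum_congr rfl (fun i _ => hstep i), ← map_sum, hvec j,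
      ContinuousLinearMap.comp_apply, hLw j]
  have hLLapp : ∀ (j : Fin 3) (v : E3), LL j v
      = ∑ m : Fin 3, (proj3 y j m * (DA m v)
          - avgV ε k u y m * (y j * v m + y m * v j)) := by
    intro j v
    rw [hLL_def, ContinuousLinearMap.sum_apply]
    refine Finset.sum_congr rfl fun m _ => ?_
    simp only [ContinuousLinearMap.add_apply, ContinuousLinearMap.smul_apply,
      ContinuousLinearMap.sub_apply, ContinuousLinearMap.zero_apply, smul_eq_mul,
      PiLp.proj_apply, EuclideanSpace.proj]
    ring
  -- inner product as sum
  have hinner : ∀ x : E3, ⟪x, y⟫ = ∑ m : Fin 3, x m * y m := by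
    intro x
    simp [PiLp.inner_apply, RCLike.inner_apply, conj_trivial, mul_comm]
  set g : ℝ → ℝ := fun r => ∑ m : Fin 3, u (r • y) m * y m with hg_def
  set Bv : ℝ := (1/ε) * ∫ r in (1:ℝ)..(1+ε), g r * r ^ k with hBv_def
  have hg_cont : Continuous g := continuous_finset_sum _ fun m _ => (hcu m).mul continuous_const
  have hgd : ∀ r : ℝ, HasDerivAt g (∑ m : Fin 3, d r m y * y m) r := by
    intro r
    refine HasDerivAt.fun_sum fun m _ => ?_
    have h1 : HasDerivAt (fun s : ℝ => s • y) y r := by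
      simpa using (hasDerivAt_id r).smul_const y
    have h2 : HasFDerivAt (fun z : E3 => u z m) (d r m) (r • y) :=
      ((hum m).differentiable one_ne_zero _).hasFDerivAt
    exact (h2.comp_hasDerivAt r h1).mul_const (y m)
  have hgd_cont : Continuous fun r => ∑ m : Fin 3, d r m y * y m :=
    continuous_finset_sum _ fun m _ => (hcdv m y).mul continuous_const
  -- (i) divergence-free identity
  have hTdiv : (∫ r in (1:ℝ)..(1+ε),
      ∑ m : Fin 3, r ^ (k+1) * d r m (EuclideanSpace.single m 1)) = 0 := by
    have hne : ∀ᵐ r ∂(volume : Measure ℝ), r ≠ 1 + ε := by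
      rw [ae_iff]
      have : {r : ℝ | ¬ r ≠ 1 + ε} = {(1+ε : ℝ)} := by ext r; simp
      rw [this]
      exact measure_singleton _
    have hae : ∀ᵐ r ∂(volume : Measure ℝ), r ∈ Set.uIoc (1:ℝ) (1+ε) →
        (∑ m : Fin 3, r ^ (k+1) * d r m (EuclideanSpace.single m 1)) = (0:ℝ) := by
      filter_upwards [hne] with r hr hmem
      rw [Set.uIoc_of_le hle] at hmem
      have h1r : 1 < r := hmem.1
      have h2r : r < 1 + ε := lt_of_le_of_ne hmem.2 hr
      have hnrm : ‖r • y‖ = r := by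
        rw [norm_smul, hy, Real.norm_eq_abs, abs_of_pos (by linarith : (0:ℝ) < r)]
        ring
      have hdz := hdiv (r • y) (by rw [hnrm]; exact h1r) (by rw [hnrm]; exact h2r)
      rw [div3] at hdz
      rw [← Finset.mul_sum]
      rw [hd_def]
      simp only []
      rw [hdz, mul_zero]
    calc (∫ r in (1:ℝ)..(1+ε), ∑ m : Fin 3, r ^ (k+1) * d r m (EuclideanSpace.single m 1))
        = ∫ r in (1:ℝ)..(1+ε), (0:ℝ) := intervalIntegral.integral_congr_ae hae
      _ = 0 := by simp
  have hT1 : ∑ m : Fin 3, DA m (EuclideanSpace.single m 1) = 0 := by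
    rw [Finset.sum_congr rfl (fun m _ => hDAapp m (EuclideanSpace.single m 1)), ← Finset.mul_sum,
      ← intervalIntegral.integral_finset_sum
        (fun m _ => ((continuous_pow (k+1)).fun_mul (hcdv m _)).intervalIntegrable _ _),
      hTdiv, mul_zero]
  -- (ii) integration by parts
  have hgb1 : g 1 = 0 := by
    have h := hb1 y hy
    rw [hinner (u y)] at h
    rw [hg_def]
    simpa [one_smul] using h
  have hgb2 : g (1+ε) = 0 := by
    have h := hb2 y hy
    rw [hinner (u ((1+ε) • y))] at h
    rw [hg_def]
    simpa using h
  have hft : (∫ r in (1:ℝ)..(1+ε),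
      ((((k:ℝ))+1) * r ^ k * g r + r ^ (k+1) * (∑ m : Fin 3, d r m y * y m)))
      = (1+ε)^(k+1) * g (1+ε) - 1^(k+1) * g 1 := by
    refine intervalIntegral.integral_eq_sub_of_hasDerivAt (f := fun s : ℝ => s ^ (k+1) * g s) (fun r _ => ?_) ?_
    · have hp : HasDerivAt (fun s : ℝ => s ^ (k+1)) ((((k:ℝ))+1) * r ^ k) r := by
        have := hasDerivAt_pow (k+1) r
        simpa [Nat.add_sub_cancel] using this
      exact hp.mul (hgd r)
    · exact ((((continuous_const.mul (continuous_pow k)).mul hg_cont)).add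
        ((continuous_pow (k+1)).mul hgd_cont)).intervalIntegrable _ _
  have hftz : (∫ r in (1:ℝ)..(1+ε),
      ((((k:ℝ))+1) * r ^ k * g r + r ^ (k+1) * (∑ m : Fin 3, d r m y * y m))) = 0 := by
    rw [hft, hgb1, hgb2]; ring
  have hsplit : (∫ r in (1:ℝ)..(1+ε), ((((k:ℝ))+1) * r ^ k * g r))
      + (∫ r in (1:ℝ)..(1+ε), r ^ (k+1) * (∑ m : Fin 3, d r m y * y m)) = 0 := by
    rw [← intervalIntegral.integral_add
      (((continuous_const.fun_mul (continuous_pow k)).fun_mul hg_cont).intervalIntegrable _ _)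
      (((continuous_pow (k+1)).fun_mul hgd_cont).intervalIntegrable _ _)]
    exact hftz
  have hI1 : (∫ r in (1:ℝ)..(1+ε), ((((k:ℝ))+1) * r ^ k * g r))
      = (((k:ℝ))+1) * ∫ r in (1:ℝ)..(1+ε), g r * r ^ k := by
    rw [← intervalIntegral.integral_const_mul]
    apply intervalIntegral.integral_congr
    intro r _
    ring
  have hgder : (∫ r in (1:ℝ)..(1+ε), r ^ (k+1) * (∑ m : Fin 3, d r m y * y m))
      = -((((k:ℝ))+1) * ∫ r in (1:ℝ)..(1+ε), g r * r ^ k) := by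
    rw [← hI1]; linarith [hsplit]
  have hQ : ∑ m : Fin 3, y m * DA m y = -(((k:ℝ)+1)) * Bv := by
    have e1 : ∀ m : Fin 3, y m * DA m y
        = (1/ε) * ∫ r in (1:ℝ)..(1+ε), r ^ (k+1) * d r m y * y m := by
      intro m
      rw [hDAapp m y, intervalIntegral.integral_mul_const]
      ring
    rw [Finset.sum_congr rfl (fun m _ => e1 m), ← Finset.mul_sum,
      ← intervalIntegral.integral_finset_sum
        (fun m _ => (((continuous_pow (k+1)).fun_mul (hcdv m y)).fun_mul
          continuous_const).intervalIntegrable _ _)]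
    have e2 : (∫ r in (1:ℝ)..(1+ε), ∑ m : Fin 3, r ^ (k+1) * d r m y * y m)
        = ∫ r in (1:ℝ)..(1+ε), r ^ (k+1) * (∑ m : Fin 3, d r m y * y m) := by
      apply intervalIntegral.integral_congr
      intro r _
      simp only [Finset.mul_sum]
      exact Finset.sum_congr rfl fun m _ => by ring
    rw [e2, hgder, hBv_def]
    ring
  -- expansion of DA m y in the basis
  have hbm : ∀ m : Fin 3, DA m y = ∑ i : Fin 3, DA m (EuclideanSpace.single i 1) * y i := by
    intro m
    conv_lhs => rw [← hyrep]
    rw [map_sum]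
    exact Finset.sum_congr rfl fun i _ => by
      rw [ContinuousLinearMap.map_smul, smul_eq_mul, mul_comm]
  -- B identity
  have hB : ∑ m : Fin 3, y m * avgV ε k u y m = Bv := by
    have e1 : ∀ m : Fin 3, y m * avgV ε k u y m
        = (1/ε) * ∫ r in (1:ℝ)..(1+ε), u (r • y) m * r ^ k * y m := by
      intro m
      have : avgV ε k u y m = (1/ε) * ∫ r in (1:ℝ)..(1+ε), u (r • y) m * r ^ k := rfl
      rw [this, intervalIntegral.integral_mul_const]
      ring
    rw [Finset.sum_congr rfl (fun m _ => e1 m), ← Finset.mul_sum,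
      ← intervalIntegral.integral_finset_sum
        (fun m _ => (((hcu m).fun_mul (continuous_pow k)).fun_mul continuous_const).intervalIntegrable _ _)]
    rw [hBv_def]
    congr 1
    apply intervalIntegral.integral_congr
    intro r _
    rw [hg_def]
    simp only [Finset.sum_mul]
    exact Finset.sum_congr rfl fun m _ => by ring
  -- components of the tangent vectors
  have hwcomp : ∀ j t : Fin 3, (EuclideanSpace.single j (1:ℝ) - y j • y) t
      = (if t = j then (1:ℝ) else 0) - y j * y t := by
    intro j t
    simp [EuclideanSpace.single_apply]
  -- main computation
  have main : ∑ j : Fin 3, (LL j) (EuclideanSpace.single j 1 - y j • y) = ((k:ℝ)-1) * Bv := by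
    rw [Finset.sum_congr rfl (fun j _ => hLLapp j _)]
    have h1e : DA 0 (EuclideanSpace.single 0 1) + DA 1 (EuclideanSpace.single 1 1)
        + DA 2 (EuclideanSpace.single 2 1) = 0 := by
      simpa [Fin.sum_univ_three] using hT1
    have hQe : y 0 * DA 0 y + y 1 * DA 1 y + y 2 * DA 2 y = -(((k:ℝ)+1)) * Bv := by
      simpa [Fin.sum_univ_three] using hQ
    have h3e : y 0 * y 0 + y 1 * y 1 + y 2 * y 2 = 1 := by
      have h := hyy1
      rw [hinner y] at h
      simpa [Fin.sum_univ_three] using h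
    have hbe : ∀ m : Fin 3, DA m y = DA m (EuclideanSpace.single 0 1) * y 0
        + DA m (EuclideanSpace.single 1 1) * y 1 + DA m (EuclideanSpace.single 2 1) * y 2 := by
      intro m
      simpa [Fin.sum_univ_three] using hbm m
    have hBe : y 0 * avgV ε k u y 0 + y 1 * avgV ε k u y 1 + y 2 * avgV ε k u y 2 = Bv := by
      simpa [Fin.sum_univ_three] using hB
    simp only [map_sub, ContinuousLinearMap.map_smul, smul_eq_mul, hwcomp, proj3,
      Matrix.of_apply, Fin.sum_univ_three]
    simp only [Fin.reduceEq, reduceIte]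
    linear_combination h1e - hQe
      + (y 0 * DA 0 y + y 1 * DA 1 y + y 2 * DA 2 y
          + 2*(y 0 * avgV ε k u y 0 + y 1 * avgV ε k u y 1 + y 2 * avgV ε k u y 2)) * h3e
      - 2 * hBe + y 0 * hbe 0 + y 1 * hbe 1 + y 2 * hbe 2
  have hRHS : ((1:ℝ)/ε) * (∫ r in (1:ℝ)..(1+ε), ⟪u (r • y), y⟫ * r ^ k) = Bv := by
    rw [hBv_def]
    congr 1
    apply intervalIntegral.integral_congr
    intro r _
    simp only []
    rw [hinner]
  constructor
  · rw [hsd, main, hRHS]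
  · intro hk
    rw [hsd, main, hk]
    norm_num
end
end
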